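/- Suppose m/h is odd. For b ∈ F_q with Tr^m_h(b) ≠ 1 (relative trace to F_{2^h}), the sum S_h(1,b) = Σ_{x ∈ F_q} (-1)^{Tr(x^(2^h+1) + bx)} equals 0. -/

import Mathlib

open Finset

section Aux

variable {F : Type} [Field F] [Fintype F] [Algebra (ZMod 2) F]

private noncomputable def frobAlg13 (F : Type) [Field F] [Fintype F] [Algebra (ZMod 2) F] :
    F ≃ₐ[ZMod 2] F :=
  haveI : CharP F 2 := charP_of_injective_ringHom (algebraMap (ZMod 2) F).injective 2
  AlgEquiv.ofRingEquiv (f := RingEquiv.ofBijective (frobenius F 2)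
    (Finite.injective_iff_bijective.mp (frobenius F 2).injective))
    (fun r => by
      simp only [RingEquiv.coe_ofBijective, frobenius_def]
      rw [← map_pow]; congr 1; revert r; decide)

private lemma tr_sq13 (x : F) :
    Algebra.trace (ZMod 2) F (x ^ 2) = Algebra.trace (ZMod 2) F x := by
  have := Algebra.trace_eq_of_algEquiv (frobAlg13 F) x
  simpa [frobAlg13, frobenius_def] using this

private lemma tr_pow13 (n : ℕ) (x : F) :
    Algebra.trace (ZMod 2) F (x ^ (2 ^ n)) = Algebra.trace (ZMod 2) F x := by
  induction n with
  | zero => simp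
  | succ n ih => rw [pow_succ, pow_mul, tr_sq13, ih]

private noncomputable def chi13 (F : Type) [Field F] [Fintype F] [Algebra (ZMod 2) F]
    (x : F) : ℤ := (-1) ^ (Algebra.trace (ZMod 2) F x).val

private lemma chi_add13 (x y : F) : chi13 F (x + y) = chi13 F x * chi13 F y := by
  unfold chi13
  rw [map_add]
  generalize Algebra.trace (ZMod 2) F x = a
  generalize Algebra.trace (ZMod 2) F y = c
  revert a c; decide

private lemma chi_tr_eq13 {x y : F}
    (hxy : Algebra.trace (ZMod 2) F x = Algebra.trace (ZMod 2) F y) :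
    chi13 F x = chi13 F y := by unfold chi13; rw [hxy]

private lemma chi_zero13 : chi13 F (0 : F) = 1 := by unfold chi13; rw [map_zero]; rfl

private lemma chi_neg_one13 {x : F} (hx : Algebra.trace (ZMod 2) F x ≠ 0) :
    chi13 F x = -1 := by
  unfold chi13
  have : Algebra.trace (ZMod 2) F x = 1 := by
    generalize Algebra.trace (ZMod 2) F x = a at *; revert a; decide
  rw [this]; rfl

private lemma addZ13 : ∀ x : ZMod 2, x + x = 0 := by decide

private lemma tr_nondeg13 {a : F} (ha : a ≠ 0) :
    ∃ y : F, Algebra.trace (ZMod 2) F (a * y) ≠ 0 := by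
  have htr := (traceForm_nondegenerate (ZMod 2) F).1 a
  simp_rw [Algebra.traceForm_apply] at htr
  by_contra! hf
  exact ha (htr hf)

/-- Sum of a nontrivial additive character over the whole field is 0. -/
private lemma sum_chi_zero13 {c : F} (hc : c ≠ 0) : ∑ x : F, chi13 F (x * c) = 0 := by
  haveI : CharP F 2 := charP_of_injective_ringHom (algebraMap (ZMod 2) F).injective 2
  obtain ⟨y, hy⟩ := tr_nondeg13 hc
  have hyc : Algebra.trace (ZMod 2) F (y * c) ≠ 0 := by rwa [mul_comm] at hy
  have key : ∑ x : F, chi13 F (x * c) = ∑ x : F, chi13 F ((x + y) * c) :=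
    (Equiv.sum_comp (Equiv.addRight y) (fun z => chi13 F (z * c))).symm
  have hneg : ∀ x : F, chi13 F ((x + y) * c) = - chi13 F (x * c) := by
    intro x
    rw [add_mul, chi_add13, chi_neg_one13 hyc]
    ring
  simp_rw [hneg, Finset.sum_neg_distrib] at key
  linarith

end Aux
/-- If `m/h` is odd and `b ∈ F_q` has relative trace `Tr^m_h(b) ≠ 1`, then
`S_h(1,b) = ∑_x (-1)^{Tr(x^(2^h+1) + b x)} = 0`. -/
theorem stmt13 (m h : ℕ) (hh : 0 < h) (hdvd : h ∣ m) (hne : h ≠ m) (hodd : Odd (m / h))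
    (F : Type) [Field F] [Fintype F] [Algebra (ZMod 2) F]
    (hcard : Fintype.card F = 2 ^ m) (b : F)
    (hb : (∑ i ∈ range (m / h), b ^ (2 ^ h) ^ i) ≠ 1) :
    ∑ x : F, (-1 : ℤ) ^ (Algebra.trace (ZMod 2) F (x ^ (2 ^ h + 1) + b * x)).val = 0 := by
  classical
  haveI hchar : CharP F 2 := charP_of_injective_ringHom (algebraMap (ZMod 2) F).injective 2
  have h2 : (2 : F) = 0 := by exact_mod_cast CharP.cast_eq_zero F 2
  have addself : ∀ x : F, x + x = 0 := fun x => by rw [← two_mul, h2, zero_mul]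
  set k := m / h with hk
  have hm0 : 0 < m := by
    rcases Nat.eq_zero_or_pos m with rfl | hm
    · rw [hk, Nat.zero_div] at hodd
      exact absurd hodd (by decide)
    · exact hm
  have hle : h ≤ m := Nat.le_of_dvd hm0 hdvd
  have hmk : m = h * k := (Nat.mul_div_cancel' hdvd).symm
  obtain ⟨t, ht⟩ := hodd
  have hpowcard : ∀ x : F, x ^ (2 ^ m : ℕ) = x := fun x => by
    rw [← hcard]; exact FiniteField.pow_card x
  have pow_fixed : ∀ (w : F) (N : ℕ), w ^ N = w → ∀ j, w ^ (N ^ j) = w := by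
    intro w N hw j
    induction j with
    | zero => simp
    | succ j ih => rw [pow_succ, pow_mul, ih, hw]
  haveI : Fact (Nat.Prime 2) := ⟨Nat.prime_two⟩
  have hsplit : ∀ (n : ℕ) (x y : F), (x + y) ^ (2 ^ n : ℕ) = x ^ (2 ^ n : ℕ) + y ^ (2 ^ n : ℕ) :=
    fun n x y => add_pow_char_pow x y 2 n
  have hq0k : ((2 : ℕ) ^ h) ^ k = 2 ^ m := by rw [← pow_mul, ← hmk]
  -- the relative-trace-like sum maps into the subfield K
  have hTmem : ∀ c : F, (∑ i ∈ range k, c ^ ((2:ℕ) ^ h) ^ i) ^ ((2:ℕ) ^ h)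
      = ∑ i ∈ range k, c ^ ((2:ℕ) ^ h) ^ i := by
    intro c
    have e1 : (∑ i ∈ range k, c ^ ((2:ℕ) ^ h) ^ i) ^ ((2:ℕ) ^ h)
        = ∑ i ∈ range k, c ^ ((2:ℕ) ^ h) ^ (i + 1) := by
      have := map_sum (iterateFrobenius F 2 h) (fun i => c ^ ((2:ℕ) ^ h) ^ i) (range k)
      simp only [iterateFrobenius_def] at this
      rw [this]
      exact Finset.sum_congr rfl fun i _ => by rw [← pow_mul, ← pow_succ]
    have e2 : (∑ i ∈ range k, c ^ ((2:ℕ) ^ h) ^ (i + 1)) + c ^ ((2:ℕ) ^ h) ^ 0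
        = (∑ i ∈ range k, c ^ ((2:ℕ) ^ h) ^ i) + c ^ ((2:ℕ) ^ h) ^ k :=
      (Finset.sum_range_succ' (fun i => c ^ ((2:ℕ) ^ h) ^ i) k).symm.trans
        (Finset.sum_range_succ (fun i => c ^ ((2:ℕ) ^ h) ^ i) k)
    rw [hq0k, hpowcard] at e2
    rw [pow_zero, pow_one] at e2
    rw [e1]
    exact add_right_cancel e2
  -- trace of the relative-trace-like sum
  have hsmul : ∀ a : ZMod 2, k • a = a := by
    intro a
    rw [ht, add_smul, one_smul, mul_smul, two_smul, addZ13, zero_add]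
  have hTtr : ∀ c : F, Algebra.trace (ZMod 2) F (∑ i ∈ range k, c ^ ((2:ℕ) ^ h) ^ i)
      = Algebra.trace (ZMod 2) F c := by
    intro c
    rw [map_sum]
    have : ∀ i ∈ range k, Algebra.trace (ZMod 2) F (c ^ ((2:ℕ) ^ h) ^ i)
        = Algebra.trace (ZMod 2) F c := by
      intro i _
      rw [show ((2:ℕ) ^ h) ^ i = 2 ^ (h * i) from (pow_mul 2 h i).symm, tr_pow13]
    rw [Finset.sum_congr rfl this, Finset.sum_const, card_range, hsmul]
  -- trace identity on the subfield K
  have hTrK : ∀ (c w : F), w ^ ((2:ℕ) ^ h) = w →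
      Algebra.trace (ZMod 2) F (c * w)
      = Algebra.trace (ZMod 2) F ((∑ i ∈ range k, c ^ ((2:ℕ) ^ h) ^ i) * w) := by
    intro c w hw
    have hwp : ∀ i, w ^ (((2:ℕ) ^ h) ^ i) = w := pow_fixed w _ hw
    have e1 : (∑ i ∈ range k, c ^ ((2:ℕ) ^ h) ^ i) * w
        = ∑ i ∈ range k, (c * w) ^ ((2:ℕ) ^ h) ^ i := by
      rw [Finset.sum_mul]
      exact Finset.sum_congr rfl fun i _ => by rw [mul_pow, hwp]
    rw [e1, hTtr (c * w)]
  -- the kernel condition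
  have hKiff : ∀ w : F, w ^ ((2:ℕ) ^ (m - h)) + w ^ ((2:ℕ) ^ h) = 0 ↔ w ^ ((2:ℕ) ^ h) = w := by
    intro w
    constructor
    · intro hw0
      have heq : w ^ ((2:ℕ) ^ (m - h)) = w ^ ((2:ℕ) ^ h) := by
        have : w ^ ((2:ℕ) ^ (m - h)) - w ^ ((2:ℕ) ^ h) = 0 := by
          rw [CharTwo.sub_eq_add]; exact hw0
        exact sub_eq_zero.mp this
      have h3 : w ^ ((2:ℕ) ^ (2 * h)) = w := by
        have h1 : w ^ ((2:ℕ) ^ (m - h) * 2 ^ h) = w ^ ((2:ℕ) ^ h * 2 ^ h) := by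
          rw [pow_mul, pow_mul, heq]
        rw [← pow_add, ← pow_add, show m - h + h = m by omega] at h1
        have e2 : (2:ℕ) ^ (2 * h) = 2 ^ (h + h) := by rw [show 2 * h = h + h by ring]
        rw [e2, ← h1]
        exact hpowcard w
    -- now iterate
      have h4 : w ^ (((2:ℕ) ^ (2 * h)) ^ (t + 1)) = w := pow_fixed w _ h3 (t + 1)
      have h5 : ((2:ℕ) ^ (2 * h)) ^ (t + 1) = 2 ^ m * 2 ^ h := by
        rw [← pow_mul, ← pow_add]
        congr 1
        rw [hmk, ht]; ring
      rw [h5, pow_mul, hpowcard] at h4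
      exact h4
    · intro hw
      have h1 : w ^ ((2:ℕ) ^ (m - h)) = w := by
        have hm' : m = h * (2 * t) + h := by rw [hmk, ht]; ring
        have : m - h = h * (2 * t) := by rw [hm']; simp
        rw [this, pow_mul]
        exact pow_fixed w _ hw (2 * t)
      rw [h1, hw, addself]
  -- algebraic identity
  have A1 : ∀ x w : F, (x ^ (2 ^ h + 1) + b * x) + ((x + w) ^ (2 ^ h + 1) + b * (x + w))
      = x ^ ((2:ℕ) ^ h) * w + x * w ^ ((2:ℕ) ^ h)
        + (w ^ (2 ^ h + 1) + b * w) := by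
    intro x w
    have hfr : (x + w) ^ ((2:ℕ) ^ h) = x ^ ((2:ℕ) ^ h) + w ^ ((2:ℕ) ^ h) := hsplit h x w
    simp only [pow_succ]
    rw [hfr]
    linear_combination (x ^ ((2:ℕ) ^ h) * x + b * x) * h2
  have A2 : ∀ x w : F, Algebra.trace (ZMod 2) F (x ^ ((2:ℕ) ^ h) * w)
      = Algebra.trace (ZMod 2) F (x * w ^ ((2:ℕ) ^ (m - h))) := by
    intro x w
    have e1 : (x ^ ((2:ℕ) ^ h) * w) ^ ((2:ℕ) ^ (m - h)) = x * w ^ ((2:ℕ) ^ (m - h)) := by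
      rw [mul_pow, ← pow_mul, ← pow_add, show h + (m - h) = m by omega, hpowcard]
    rw [← e1, tr_pow13]
  -- set up S
  have main : ∑ x : F, chi13 F (x ^ (2 ^ h + 1) + b * x) = 0 := by
    set S := ∑ x : F, chi13 F (x ^ (2 ^ h + 1) + b * x) with hS
    have step1 : S * S = ∑ x : F, ∑ w : F,
        chi13 F ((x ^ (2 ^ h + 1) + b * x) + ((x + w) ^ (2 ^ h + 1) + b * (x + w))) := by
      rw [hS, Finset.sum_mul_sum]
      refine Finset.sum_congr rfl fun x _ => ?_
      rw [← Equiv.sum_comp (Equiv.addLeft x)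
        (fun y => chi13 F (x ^ (2 ^ h + 1) + b * x) * chi13 F (y ^ (2 ^ h + 1) + b * y))]
      exact Finset.sum_congr rfl fun w _ => (chi_add13 _ _).symm
    have step2 : ∀ x w : F,
        Algebra.trace (ZMod 2) F ((x ^ (2 ^ h + 1) + b * x) + ((x + w) ^ (2 ^ h + 1) + b * (x + w)))
        = Algebra.trace (ZMod 2) F (x * (w ^ ((2:ℕ) ^ (m - h)) + w ^ ((2:ℕ) ^ h)))
          + Algebra.trace (ZMod 2) F (w ^ (2 ^ h + 1) + b * w) := by
      intro x w
      rw [A1 x w]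
      simp only [mul_add, map_add]
      rw [A2 x w]
    have step3 : S * S = ∑ w : F, chi13 F (w ^ (2 ^ h + 1) + b * w)
        * ∑ x : F, chi13 F (x * (w ^ ((2:ℕ) ^ (m - h)) + w ^ ((2:ℕ) ^ h))) := by
      rw [step1, Finset.sum_comm]
      refine Finset.sum_congr rfl fun w _ => ?_
      rw [Finset.mul_sum]
      refine Finset.sum_congr rfl fun x _ => ?_
      calc chi13 F ((x ^ (2 ^ h + 1) + b * x) + ((x + w) ^ (2 ^ h + 1) + b * (x + w)))
          = chi13 F ((w ^ (2 ^ h + 1) + b * w)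
              + x * (w ^ ((2:ℕ) ^ (m - h)) + w ^ ((2:ℕ) ^ h))) := by
            refine chi_tr_eq13 ?_
            rw [step2 x w, map_add (Algebra.trace (ZMod 2) F) (w ^ (2 ^ h + 1) + b * w)
              (x * (w ^ ((2:ℕ) ^ (m - h)) + w ^ ((2:ℕ) ^ h)))]
            exact add_comm _ _
        _ = chi13 F (w ^ (2 ^ h + 1) + b * w)
              * chi13 F (x * (w ^ ((2:ℕ) ^ (m - h)) + w ^ ((2:ℕ) ^ h))) := chi_add13 _ _
    have step4 : S * S = ∑ w ∈ univ.filter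
        (fun w : F => w ^ ((2:ℕ) ^ (m - h)) + w ^ ((2:ℕ) ^ h) = 0),
        chi13 F (w ^ (2 ^ h + 1) + b * w) * (2 ^ m : ℤ) := by
      rw [step3]
      have e1 : ∀ w : F, chi13 F (w ^ (2 ^ h + 1) + b * w)
          * (∑ x : F, chi13 F (x * (w ^ ((2:ℕ) ^ (m - h)) + w ^ ((2:ℕ) ^ h))))
          = if (w ^ ((2:ℕ) ^ (m - h)) + w ^ ((2:ℕ) ^ h) = 0)
            then chi13 F (w ^ (2 ^ h + 1) + b * w) * (2 ^ m : ℤ) else 0 := by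
        intro w
        by_cases hLw : w ^ ((2:ℕ) ^ (m - h)) + w ^ ((2:ℕ) ^ h) = 0
        · rw [if_pos hLw]
          congr 1
          rw [hLw]
          simp only [mul_zero, chi_zero13]
          rw [Finset.sum_const, card_univ, hcard, nsmul_eq_mul, mul_one]
          push_cast
          ring
        · rw [if_neg hLw, sum_chi_zero13 hLw, mul_zero]
      simp_rw [e1]
      rw [← Finset.sum_filter]
    -- restrict to subfield condition
    have hKset : univ.filter (fun w : F => w ^ ((2:ℕ) ^ (m - h)) + w ^ ((2:ℕ) ^ h) = 0)
        = univ.filter (fun w : F => w ^ ((2:ℕ) ^ h) = w) :=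
      Finset.filter_congr (fun w _ => by rw [hKiff w])
    have step5 : S * S
        = (∑ w ∈ univ.filter (fun w : F => w ^ ((2:ℕ) ^ h) = w), chi13 F ((1 + b) * w))
          * (2 ^ m : ℤ) := by
      rw [step4, hKset, Finset.sum_mul]
      refine Finset.sum_congr rfl fun w hw => ?_
      rw [Finset.mem_filter] at hw
      congr 1
      refine chi_tr_eq13 ?_
      have h1 : w ^ (2 ^ h + 1) = w ^ 2 := by rw [pow_succ, hw.2, sq]
      rw [h1, add_mul, one_mul, map_add, map_add, tr_sq13]
    -- find the witness w₀
    have hd : (∑ i ∈ range k, (1 + b) ^ ((2:ℕ) ^ h) ^ i)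
        = 1 + ∑ i ∈ range k, b ^ ((2:ℕ) ^ h) ^ i := by
      have e1 : ∀ i ∈ range k, (1 + b) ^ ((2:ℕ) ^ h) ^ i = 1 + b ^ ((2:ℕ) ^ h) ^ i := by
        intro i _
        rw [show ((2:ℕ) ^ h) ^ i = 2 ^ (h * i) from (pow_mul 2 h i).symm]
        rw [hsplit (h * i) 1 b, one_pow]
      rw [Finset.sum_congr rfl e1, Finset.sum_add_distrib, Finset.sum_const, card_range]
      congr 1
      rw [nsmul_eq_mul, mul_one, ht]
      push_cast
      rw [h2]
      ring
    have hdne : (∑ i ∈ range k, (1 + b) ^ ((2:ℕ) ^ h) ^ i) ≠ 0 := by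
      rw [hd]
      intro hcon
      apply hb
      linear_combination hcon - h2
    obtain ⟨y, hy⟩ := tr_nondeg13 (one_ne_zero (α := F))
    rw [one_mul] at hy
    set d : F := ∑ i ∈ range k, (1 + b) ^ ((2:ℕ) ^ h) ^ i with hdd
    set Ty : F := ∑ i ∈ range k, y ^ ((2:ℕ) ^ h) ^ i with hTy
    set w₀ : F := d⁻¹ * Ty with hw₀
    have hw0K : w₀ ^ ((2:ℕ) ^ h) = w₀ := by
      rw [hw₀, mul_pow, inv_pow, hdd, hTy, hTmem (1 + b), hTmem y]
    have htrw0 : Algebra.trace (ZMod 2) F ((1 + b) * w₀) ≠ 0 := by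
      rw [hTrK (1 + b) w₀ hw0K, ← hdd, hw₀, ← mul_assoc, mul_inv_cancel₀ hdne, one_mul, hTy,
        hTtr y]
      exact hy
    -- the subfield character sum vanishes
    have hKS : ∑ w ∈ univ.filter (fun w : F => w ^ ((2:ℕ) ^ h) = w), chi13 F ((1 + b) * w)
        = 0 := by
      have hmem : ∀ w : F, w ∈ univ.filter (fun w : F => w ^ ((2:ℕ) ^ h) = w)
          ↔ w + w₀ ∈ univ.filter (fun w : F => w ^ ((2:ℕ) ^ h) = w) := by
        intro w
        simp only [Finset.mem_filter, Finset.mem_univ, true_and]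
        constructor
        · intro hw
          rw [hsplit h w w₀, hw, hw0K]
        · intro hw
          have hs := hsplit h w w₀
          rw [hw] at hs
          linear_combination -hs - hw0K
      have key : ∑ w ∈ univ.filter (fun w : F => w ^ ((2:ℕ) ^ h) = w),
              chi13 F ((1 + b) * (w + w₀))
          = ∑ w ∈ univ.filter (fun w : F => w ^ ((2:ℕ) ^ h) = w), chi13 F ((1 + b) * w) := by
        refine Finset.sum_equiv (Equiv.addRight w₀) (fun w => (hmem w)) (fun w _ => ?_)
        rfl
      have hneg : ∀ w : F, chi13 F ((1 + b) * (w + w₀)) = - chi13 F ((1 + b) * w) := by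
        intro w
        rw [mul_add, chi_add13, chi_neg_one13 htrw0]
        ring
      simp_rw [hneg, Finset.sum_neg_distrib] at key
      linarith
    have hSS : S * S = 0 := by rw [step5, hKS, zero_mul]
    exact mul_self_eq_zero.mp hSS
  simpa [chi13] using main
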